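/- For the dirty-paper auxiliary choice U = X'_1 + α_{10}X'_2 + α_{11}S_1 + α_{12}S_2 with X'_1 ~ N(0, γP'), X'_2 ~ N(0, γ̄P'), S_1 ~ N(0,Q_1), S_2 ~ N(0,Q_2) mutually independent, channel Y_1 = X'_1 + X'_2 + (1+β_1)S_1 + β_2 S_2 + Z_1, Z_1 ~ N(0,N_1) independent, and coefficients α_{10} = γP'/(γP'+N_1), α_{11} = (1+β_1)γP'/(γP'+N_1), α_{12} = β_2γP'/(γP'+N_1), the rate expression satisfies I(U; Y_1) − I(U; X'_2, S_1, S_2) = (1/2)·log(1 + γP'/N_1). -/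
import Mathlib


open Real

/-- dirty-paper rate computation.  With mutually independent zero-mean
Gaussians `X'₁ ~ N(0,γP')`, `X'₂ ~ N(0,(1−γ)P')`, `S₁ ~ N(0,Q₁)`, `S₂ ~ N(0,Q₂)`,
`Z₁ ~ N(0,N₁)`, auxiliary `U = X'₁ + α₁₀X'₂ + α₁₁S₁ + α₁₂S₂`, channel output
`Y₁ = X'₁ + X'₂ + (1+β₁)S₁ + β₂S₂ + Z₁`, and the stated dirty-paper coefficients, the
jointly Gaussian mutual informations (computed from the covariance structure:
`I(U;Y₁) = ½ log(VarU·VarY/(VarU·VarY − Cov(U,Y₁)²))` and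
`I(U;X'₂,S₁,S₂) = ½ log(VarU/Var(U|X'₂,S₁,S₂))` with `Var(U|X'₂,S₁,S₂) = γP'`) satisfy
`I(U;Y₁) − I(U;X'₂,S₁,S₂) = ½ log(1 + γP'/N₁)`. -/
theorem dirty_paper_rate
    (γ P' N1 Q1 Q2 β1 β2 : ℝ)
    (hγ0 : 0 < γ) (hγ1 : γ < 1) (hP' : 0 < P') (hN1 : 0 < N1) (hQ1 : 0 < Q1) (hQ2 : 0 < Q2)
    (α10 α11 α12 : ℝ)
    (hα10 : α10 = γ * P' / (γ * P' + N1))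
    (hα11 : α11 = (1 + β1) * γ * P' / (γ * P' + N1))
    (hα12 : α12 = β2 * γ * P' / (γ * P' + N1))
    (varU varY covUY varUgB IUY IUB : ℝ)
    (hvarU : varU = γ * P' + α10 ^ 2 * (1 - γ) * P' + α11 ^ 2 * Q1 + α12 ^ 2 * Q2)
    (hvarY : varY = γ * P' + (1 - γ) * P' + (1 + β1) ^ 2 * Q1 + β2 ^ 2 * Q2 + N1)
    (hcovUY : covUY = γ * P' + α10 * (1 - γ) * P' + α11 * (1 + β1) * Q1 + α12 * β2 * Q2)
    (hvarUgB : varUgB = γ * P')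
    (hIUY : IUY = (1 / 2) * Real.log (varU * varY / (varU * varY - covUY ^ 2)))
    (hIUB : IUB = (1 / 2) * Real.log (varU / varUgB)) :
    IUY - IUB = (1 / 2) * Real.log (1 + γ * P' / N1) := by
  have ha : 0 < γ * P' := by positivity
  have haN : 0 < γ * P' + N1 := by linarith
  have h1γ : (0:ℝ) ≤ 1 - γ := by linarith
  have hvarUpos : 0 < varU := by
    rw [hvarU]
    nlinarith [mul_nonneg (mul_nonneg (sq_nonneg α10) h1γ) hP'.le,
      mul_nonneg (sq_nonneg α11) hQ1.le, mul_nonneg (sq_nonneg α12) hQ2.le]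
  have hvarYpos : 0 < varY := by
    rw [hvarY]
    nlinarith [mul_nonneg (sq_nonneg (1 + β1)) hQ1.le, mul_nonneg (sq_nonneg β2) hQ2.le,
      mul_nonneg h1γ hP'.le]
  have hkey : varU * varY - covUY ^ 2 = γ * P' * N1 * varY / (γ * P' + N1) := by
    rw [hvarU, hcovUY, hα10, hα11, hα12, hvarY]
    field_simp
    ring
  have hdenpos : 0 < varU * varY - covUY ^ 2 := by
    rw [hkey]; positivity
  have harg : varU * varY / (varU * varY - covUY ^ 2) / (varU / (γ * P'))
      = 1 + γ * P' / N1 := by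
    rw [hkey]
    field_simp
    ring
  rw [hIUY, hIUB, hvarUgB, ← mul_sub,
    ← Real.log_div (by positivity) (by positivity), harg]
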